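/- There exists a constant C > 0 such that for all integers k ≥ 2 and ℓ ≥ 2, the number of vectors m = (m₀, m₁, …, m_k) of nonnegative integers satisfying m₀ + m₁ + ⋯ + m_k = ℓ and, for every α = 1, …, k, Σ_{i=α}^{k} m_i ≤ √(k/α), is at most exp(C · k^{1/3} · (ln ℓ + ln k)). -/

import Mathlib

set_option maxHeartbeats 1600000 in
/-- There is a constant `C > 0` such that for all `k, ℓ ≥ 2`, the number of
nonnegative integer vectors `m = (m₀,…,m_k)` with `∑ mᵢ = ℓ` and
`∑_{i ≥ α} mᵢ ≤ √(k/α)` for every `α = 1,…,k` is at most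
`exp (C · k^{1/3} · (ln ℓ + ln k))`. -/
theorem count_m_vectors :
    ∃ C : ℝ, 0 < C ∧ ∀ k l : ℕ, 2 ≤ k → 2 ≤ l →
      (({m : Fin (k + 1) → ℕ |
          (∑ i, m i) = l ∧
          ∀ α : ℕ, 1 ≤ α → α ≤ k →
            ((∑ i ∈ Finset.univ.filter (fun i : Fin (k + 1) => α ≤ (i : ℕ)), m i : ℕ) : ℝ) ≤
              Real.sqrt ((k : ℝ) / (α : ℝ))}).ncard : ℝ) ≤
        Real.exp (C * (k : ℝ) ^ ((1 : ℝ) / 3) * (Real.log l + Real.log k)) := by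
  refine ⟨100, by norm_num, ?_⟩
  intro k l hk hl
  set x : ℝ := (k : ℝ) ^ ((1 : ℝ)/3) with hxdef
  have hk1 : (1 : ℝ) ≤ (k : ℝ) := by exact_mod_cast le_trans one_le_two hk
  have hk2 : (2 : ℝ) ≤ (k : ℝ) := by exact_mod_cast hk
  have hl2 : (2 : ℝ) ≤ (l : ℝ) := by exact_mod_cast hl
  have hx1 : (1 : ℝ) ≤ x := Real.one_le_rpow hk1 (by norm_num)
  set t : ℕ := ⌈x⌉₊ with htdef
  have ht1 : 1 ≤ t := Nat.one_le_ceil_iff.mpr (lt_of_lt_of_le one_pos hx1)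
  have hxt : x ≤ (t : ℝ) := Nat.le_ceil x
  have htx : (t : ℝ) ≤ 2 * x := by
    have := Nat.ceil_lt_add_one (le_trans zero_le_one hx1)
    rw [← htdef] at this
    linarith
  have htk : t ≤ k := by
    rw [htdef]
    apply Nat.ceil_le.mpr
    calc x ≤ (k : ℝ) ^ (1 : ℝ) := Real.rpow_le_rpow_of_exponent_le hk1 (by norm_num)
      _ = (k : ℝ) := Real.rpow_one _
  have hkt3 : (k : ℝ) ≤ (t : ℝ) ^ 3 := by
    have h1 : x ^ 3 ≤ (t : ℝ) ^ 3 := pow_le_pow_left₀ (by linarith) hxt 3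
    have h2 : x ^ 3 = (k : ℝ) := by
      rw [hxdef, ← Real.rpow_natCast ((k:ℝ) ^ ((1:ℝ)/3)) 3, ← Real.rpow_mul (by positivity)]
      norm_num
    linarith
  have htpos : (0 : ℝ) < (t : ℝ) := by exact_mod_cast ht1
  have hsqrt : Real.sqrt ((k : ℝ) / (t : ℝ)) ≤ (t : ℝ) := by
    have h1 : (k : ℝ) / (t : ℝ) ≤ (t : ℝ) ^ 2 := by
      rw [div_le_iff₀ htpos]
      nlinarith
    calc Real.sqrt ((k : ℝ) / (t : ℝ)) ≤ Real.sqrt ((t : ℝ) ^ 2) := Real.sqrt_le_sqrt h1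
      _ = (t : ℝ) := Real.sqrt_sq htpos.le
  have hle1 : t ≤ k + 1 := by omega
  set S := {m : Fin (k + 1) → ℕ |
          (∑ i, m i) = l ∧
          ∀ α : ℕ, 1 ≤ α → α ≤ k →
            ((∑ i ∈ Finset.univ.filter (fun i : Fin (k + 1) => α ≤ (i : ℕ)), m i : ℕ) : ℝ) ≤
              Real.sqrt ((k : ℝ) / (α : ℝ))} with hSdef
  set F : (Fin (k+1) → ℕ) → Finset (Fin (k+1)) :=
    fun m => Finset.univ.filter (fun i => t ≤ (i : ℕ) ∧ m i ≠ 0) with hFdef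
  set L : (Fin (k+1) → ℕ) → List (Fin (k+1)) := fun m => (F m).sort (· ≤ ·) with hLdef
  set f : (Fin (k+1) → ℕ) → ((Fin t → Fin (l+1)) × (Fin t → Fin (k+2) × Fin (t+1))) := fun m =>
    (fun j => ⟨min (m (Fin.castLE hle1 j)) l, Nat.lt_succ_of_le (min_le_right _ _)⟩,
     fun j => ((L m)[(j : ℕ)]?).elim (Fin.last (k+1), ⟨0, Nat.succ_pos t⟩)
       (fun i => (i.castSucc, ⟨min (m i) t, Nat.lt_succ_of_le (min_le_right _ _)⟩))) with hfdef
  have hmain : ∀ m ∈ S, (∀ i, m i ≤ l) ∧ ((F m).card ≤ t) ∧ (∀ i ∈ F m, m i ≤ t) ∧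
      (∀ i : Fin (k+1), t ≤ (i : ℕ) → i ∉ F m → m i = 0) := by
    intro m hm
    obtain ⟨h1, h2⟩ := hm
    have hml : ∀ i, m i ≤ l := fun i =>
      h1 ▸ Finset.single_le_sum (fun _ _ => Nat.zero_le _) (Finset.mem_univ i)
    have hts : (∑ i ∈ Finset.univ.filter (fun i : Fin (k+1) => t ≤ (i : ℕ)), m i) ≤ t := by
      have h := (h2 t ht1 htk).trans hsqrt
      exact_mod_cast h
    have hsub : F m ⊆ Finset.univ.filter (fun i : Fin (k+1) => t ≤ (i : ℕ)) := by
      intro i hi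
      simp only [hFdef, Finset.mem_filter, Finset.mem_univ, true_and] at hi ⊢
      exact hi.1
    have hvt : ∀ i ∈ F m, m i ≤ t := fun i hi =>
      le_trans (Finset.single_le_sum (fun _ _ => Nat.zero_le _) (hsub hi)) hts
    have hcard : (F m).card ≤ t := by
      calc (F m).card = ∑ _i ∈ F m, 1 := by simp
        _ ≤ ∑ i ∈ F m, m i := Finset.sum_le_sum (fun i hi => by
            simp only [hFdef, Finset.mem_filter] at hi; omega)
        _ ≤ ∑ i ∈ Finset.univ.filter (fun i : Fin (k+1) => t ≤ (i : ℕ)), m i :=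
            Finset.sum_le_sum_of_subset hsub
        _ ≤ t := hts
    have hzero : ∀ i : Fin (k+1), t ≤ (i : ℕ) → i ∉ F m → m i = 0 := by
      intro i hi hni
      simp only [hFdef, Finset.mem_filter, Finset.mem_univ, true_and, not_and, ne_eq,
        not_not] at hni
      exact hni hi
    exact ⟨hml, hcard, hvt, hzero⟩
  have hsort : ∀ m, (F m).sort (· ≤ ·) = L m := fun m => by rw [hLdef]
  have hinj : Set.InjOn f S := by
    intro m hm m' hm' hfe
    obtain ⟨hml, hcard, hvt, hzero⟩ := hmain m hm
    obtain ⟨hml', hcard', hvt', hzero'⟩ := hmain m' hm'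
    have hlen : (L m).length = (F m).card := by rw [← hsort m]; exact Finset.length_sort _
    have hlen' : (L m').length = (F m').card := by rw [← hsort m']; exact Finset.length_sort _
    have h1 := congrArg Prod.fst hfe
    have h2 := congrArg Prod.snd hfe
    have hL : L m = L m' := by
      apply List.ext_getElem?
      intro n
      by_cases hn : n < t
      · have hcj := congrFun h2 ⟨n, hn⟩
        simp only [hfdef] at hcj
        rcases e1 : (L m)[n]? with _ | i <;> rcases e2 : (L m')[n]? with _ | i'
        · rfl
        · exfalso
          rw [e1, e2] at hcj
          simp only [Option.elim] at hcj
          have hv := congrArg (fun p => ((p.1 : Fin (k+2)) : ℕ)) hcj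
          simp only [Fin.val_last, Fin.coe_castSucc] at hv
          have := i'.isLt
          omega
        · exfalso
          rw [e1, e2] at hcj
          simp only [Option.elim] at hcj
          have hv := congrArg (fun p => ((p.1 : Fin (k+2)) : ℕ)) hcj
          simp only [Fin.val_last, Fin.coe_castSucc] at hv
          have := i.isLt
          omega
        · rw [e1, e2] at hcj
          simp only [Option.elim] at hcj
          have hv := congrArg (fun p => ((p.1 : Fin (k+2)) : ℕ)) hcj
          simp only [Fin.coe_castSucc] at hv
          rw [Fin.ext hv]
      · push_neg at hn
        rw [List.getElem?_eq_none (by omega : (L m).length ≤ n),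
          List.getElem?_eq_none (by omega : (L m').length ≤ n)]
    have hFF : F m = F m' := by
      rw [← Finset.sort_toFinset (s := F m) (r := (· ≤ ·)), ← Finset.sort_toFinset (s := F m') (r := (· ≤ ·)),
        hsort m, hsort m', hL]
    funext i
    rcases lt_or_ge (i : ℕ) t with hi | hi
    · have hcj := congrFun h1 ⟨(i : ℕ), hi⟩
      simp only [hfdef] at hcj
      have hci : Fin.castLE hle1 (⟨(i : ℕ), hi⟩ : Fin t) = i := Fin.ext rfl
      rw [hci] at hcj
      have hv : min (m i) l = min (m' i) l := congrArg Fin.val hcj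
      have := hml i
      have := hml' i
      omega
    · by_cases hmem : i ∈ F m
      · have hmem' : i ∈ F m' := hFF ▸ hmem
        have hiL : i ∈ L m := by rw [← hsort m]; exact (Finset.mem_sort _).2 hmem
        obtain ⟨n, hnlen, hni⟩ := List.mem_iff_getElem.mp hiL
        have hnt : n < t := by omega
        have hcj := congrFun h2 ⟨n, hnt⟩
        simp only [hfdef] at hcj
        have e1 : (L m)[n]? = some i := by
          rw [List.getElem?_eq_getElem hnlen]
          exact congrArg some hni
        have e2 : (L m')[n]? = some i := by rw [← hL]; exact e1
        rw [e1, e2] at hcj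
        simp only [Option.elim] at hcj
        have hv : min (m i) t = min (m' i) t :=
          congrArg (fun p => ((p.2 : Fin (t+1)) : ℕ)) hcj
        have := hvt i hmem
        have := hvt' i hmem'
        omega
      · have hmem' : i ∉ F m' := hFF ▸ hmem
        rw [hzero i hi hmem, hzero' i hi hmem']
  have hcount : S.ncard ≤ (l+1)^t * ((k+2)*(t+1))^t := by
    have h := Set.ncard_le_ncard_of_injOn f (fun a _ => Set.mem_univ (f a)) hinj Set.finite_univ
    rw [Set.ncard_univ, Nat.card_eq_fintype_card] at h
    have hcardeq : Fintype.card ((Fin t → Fin (l+1)) × (Fin t → Fin (k+2) × Fin (t+1)))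
        = (l+1)^t * ((k+2)*(t+1))^t := by
      simp [Fintype.card_fun]
    omega
  set a : ℝ := ((l : ℝ) + 1) * (((k : ℝ) + 2) * ((t : ℝ) + 1)) with hadef
  have hapos : (0 : ℝ) < a := by positivity
  have hSa : ((S.ncard : ℕ) : ℝ) ≤ a ^ t := by
    have h : ((S.ncard : ℕ) : ℝ) ≤ (((l+1)^t * ((k+2)*(t+1))^t : ℕ) : ℝ) :=
      Nat.cast_le.mpr hcount
    rw [hadef, mul_pow]
    push_cast at h
    linarith
  have hexp : a ^ t = Real.exp ((t : ℝ) * Real.log a) := by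
    rw [← Real.log_pow, Real.exp_log (pow_pos hapos t)]
  have hll : (0 : ℝ) ≤ Real.log l := Real.log_nonneg (by linarith)
  have hlk : (0 : ℝ) ≤ Real.log k := Real.log_nonneg (by linarith)
  have b1 : Real.log ((l : ℝ) + 1) ≤ 2 * Real.log l := by
    have hle : ((l : ℝ) + 1) ≤ (l : ℝ) ^ 2 := by nlinarith
    calc Real.log ((l : ℝ) + 1) ≤ Real.log ((l : ℝ) ^ 2) :=
          Real.log_le_log (by positivity) hle
      _ = 2 * Real.log l := by rw [Real.log_pow]; norm_num
  have b2 : Real.log ((k : ℝ) + 2) ≤ 2 * Real.log k := by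
    have hle : ((k : ℝ) + 2) ≤ (k : ℝ) ^ 2 := by nlinarith
    calc Real.log ((k : ℝ) + 2) ≤ Real.log ((k : ℝ) ^ 2) :=
          Real.log_le_log (by positivity) hle
      _ = 2 * Real.log k := by rw [Real.log_pow]; norm_num
  have b3 : Real.log ((t : ℝ) + 1) ≤ 2 * Real.log k := by
    have htkr : (t : ℝ) ≤ (k : ℝ) := by exact_mod_cast htk
    have hle : ((t : ℝ) + 1) ≤ (k : ℝ) ^ 2 := by nlinarith
    calc Real.log ((t : ℝ) + 1) ≤ Real.log ((k : ℝ) ^ 2) :=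
          Real.log_le_log (by positivity) hle
      _ = 2 * Real.log k := by rw [Real.log_pow]; norm_num
  have hloga : Real.log a = Real.log ((l : ℝ) + 1) +
      (Real.log ((k : ℝ) + 2) + Real.log ((t : ℝ) + 1)) := by
    rw [hadef, Real.log_mul (by positivity) (by positivity),
      Real.log_mul (by positivity) (by positivity)]
  have hlogabound : Real.log a ≤ 4 * (Real.log l + Real.log k) := by
    rw [hloga]; linarith
  have hloganonneg : (0 : ℝ) ≤ Real.log a := by
    apply Real.log_nonneg
    rw [hadef]
    have e1 : (1:ℝ) ≤ (l:ℝ)+1 := by linarith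
    have e2 : (1:ℝ) ≤ (k:ℝ)+2 := by linarith
    have e3 : (1:ℝ) ≤ (t:ℝ)+1 := by linarith
    nlinarith [e1, e2, e3, mul_le_mul e2 e3 (by linarith) (by linarith)]
  have hfinal : (t : ℝ) * Real.log a ≤ 100 * x * (Real.log l + Real.log k) := by
    have h1 : (t : ℝ) * Real.log a ≤ (2 * x) * (4 * (Real.log l + Real.log k)) := by
      apply mul_le_mul htx hlogabound hloganonneg (by linarith)
    nlinarith
  calc ((S.ncard : ℕ) : ℝ) ≤ a ^ t := hSa
    _ = Real.exp ((t : ℝ) * Real.log a) := hexp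
    _ ≤ Real.exp (100 * x * (Real.log l + Real.log k)) := Real.exp_le_exp.mpr hfinal
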